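/- Dual mean property of ranking scores: assume S(ω) ∈ {0,1} for all ω ∈ Ω, let I₁ and I₂ be importances with I₁(ω) = I₂(ω) for every ω with S(ω) = 0, and let I = (I₁ + I₂)/2 (pointwise). Then for every performance p with ∑_{ω : S(ω)=0} I₁(ω)·p(ω) > 0, the ranking scores R_{I₁}(p), R_{I₂}(p), R_I(p) are all defined and strictly less than 1, and 1 / (1 − R_I(p)) = (1/2)·(1 / (1 − R_{I₁}(p))) + (1/2)·(1 / (1 − R_{I₂}(p))). -/
import Mathlib


/-- A performance on a finite sample space: nonnegative and summing to one. -/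
def IsPerformance {Ω : Type*} [Fintype Ω] (p : Ω → ℝ) : Prop :=
  (∀ ω, 0 ≤ p ω) ∧ ∑ ω, p ω = 1

/-- An importance: nonnegative and nonzero. -/
def IsImportance {Ω : Type*} [Fintype Ω] (I : Ω → ℝ) : Prop :=
  (∀ ω, 0 ≤ I ω) ∧ ∃ ω, 0 < I ω

/-- The ranking score with importance `I` and satisfaction `S`. -/
noncomputable def rankingScore {Ω : Type*} [Fintype Ω] (I S p : Ω → ℝ) : ℝ :=
  (∑ ω, I ω * S ω * p ω) / (∑ ω, I ω * p ω)

lemma aux11 {Ω : Type*} [Fintype Ω] (I S p : Ω → ℝ)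
    (hI : ∀ ω, 0 ≤ I ω) (hp : ∀ ω, 0 ≤ p ω) (hS : ∀ ω, S ω = 0 ∨ S ω = 1)
    {c : ℝ} (hc : 0 < c)
    (hdiff : (∑ ω, I ω * p ω) - (∑ ω, I ω * S ω * p ω) = c) :
    0 < ∑ ω, I ω * p ω ∧ rankingScore I S p < 1 ∧
      1 / (1 - rankingScore I S p) = (∑ ω, I ω * p ω) / c := by
  have hN : 0 ≤ ∑ ω, I ω * S ω * p ω := by
    apply Finset.sum_nonneg
    intro ω _
    rcases hS ω with h | h <;> simp [h]
    exact mul_nonneg (hI ω) (hp ω)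
  have hD : 0 < ∑ ω, I ω * p ω := by linarith
  refine ⟨hD, ?_, ?_⟩
  · rw [rankingScore, div_lt_one hD]; linarith
  · rw [rankingScore]
    rw [one_sub_div hD.ne', hdiff, one_div_div]

theorem stmt11 {Ω : Type*} [Fintype Ω] [Nonempty Ω] (S I₁ I₂ : Ω → ℝ)
    (hI₁ : IsImportance I₁) (hI₂ : IsImportance I₂)
    (hS : ∀ ω, S ω = 0 ∨ S ω = 1)
    (heq : ∀ ω, S ω = 0 → I₁ ω = I₂ ω)
    (p : Ω → ℝ) (hp : IsPerformance p)
    (hpos : 0 < ∑ ω ∈ Finset.univ.filter (fun ω => S ω = 0), I₁ ω * p ω) :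
    (∑ ω, I₁ ω * p ω ≠ 0) ∧ (∑ ω, I₂ ω * p ω ≠ 0) ∧
    (∑ ω, ((I₁ ω + I₂ ω) / 2) * p ω ≠ 0) ∧
    rankingScore I₁ S p < 1 ∧ rankingScore I₂ S p < 1 ∧
    rankingScore (fun ω => (I₁ ω + I₂ ω) / 2) S p < 1 ∧
    1 / (1 - rankingScore (fun ω => (I₁ ω + I₂ ω) / 2) S p) =
      (1 / 2) * (1 / (1 - rankingScore I₁ S p)) +
        (1 / 2) * (1 / (1 - rankingScore I₂ S p)) := by
  set c := ∑ ω ∈ Finset.univ.filter (fun ω => S ω = 0), I₁ ω * p ω with hc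
  have key : ∀ I : Ω → ℝ, (∀ ω, S ω = 0 → I ω = I₁ ω) →
      (∑ ω, I ω * p ω) - (∑ ω, I ω * S ω * p ω) = c := by
    intro I hIeq
    rw [hc, Finset.sum_filter, ← Finset.sum_sub_distrib]
    apply Finset.sum_congr rfl
    intro ω _
    rcases hS ω with h | h <;> simp [h, hIeq ω]
  have h1 := aux11 I₁ S p hI₁.1 hp.1 hS hpos (key I₁ (fun _ _ => rfl))
  have h2 := aux11 I₂ S p hI₂.1 hp.1 hS hpos (key I₂ (fun ω h => (heq ω h).symm))
  have hIavg : ∀ ω, 0 ≤ (I₁ ω + I₂ ω) / 2 := fun ω => by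
    have := hI₁.1 ω; have := hI₂.1 ω; linarith
  have hkey3 : (∑ ω, ((I₁ ω + I₂ ω) / 2) * p ω) - (∑ ω, ((I₁ ω + I₂ ω) / 2) * S ω * p ω) = c :=
    key _ (fun ω h => by rw [heq ω h]; ring)
  have h3 := aux11 (fun ω => (I₁ ω + I₂ ω) / 2) S p hIavg hp.1 hS hpos hkey3
  have hsum : (∑ ω, ((I₁ ω + I₂ ω) / 2) * p ω) =
      ((∑ ω, I₁ ω * p ω) + (∑ ω, I₂ ω * p ω)) / 2 := by
    rw [← Finset.sum_add_distrib, Finset.sum_div]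
    exact Finset.sum_congr rfl fun ω _ => by ring
  refine ⟨h1.1.ne', h2.1.ne', h3.1.ne', h1.2.1, h2.2.1, h3.2.1, ?_⟩
  rw [h1.2.2, h2.2.2, h3.2.2, hsum]
  field_simp
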